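/- Let X be a GC_{d,n} set in R^d with n ≥ 1 and d ≥ 1. Then for each point p ∈ X, the linear parts (at p) of the affine-linear factors, taken over all factors l of the polynomials Q_q (q ≠ p) with l(p) = 0, span a d-dimensional space; equivalently, there are d such factors vanishing at p whose linear parts are linearly independent. -/

import Mathlib

open MvPolynomial

private lemma affine_eval {d : ℕ} (a : Fin d → ℝ) (c : ℝ) (x : Fin d → ℝ) :
    eval x ((∑ j, MvPolynomial.C (a j) * MvPolynomial.X j) + MvPolynomial.C c)
      = (∑ j, a j * x j) + c := by
  simp

private lemma affine_deg {d : ℕ} (a : Fin d → ℝ) (c : ℝ) :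
    ((∑ j, MvPolynomial.C (a j) * MvPolynomial.X j) + MvPolynomial.C c :
      MvPolynomial (Fin d) ℝ).totalDegree ≤ 1 := by
  refine le_trans (totalDegree_add _ _) (max_le ?_ (by simp))
  refine le_trans (totalDegree_finset_sum _ _) (Finset.sup_le fun j _ => ?_)
  refine le_trans (totalDegree_mul _ _) ?_
  simp

private lemma finrank_rtd_le (d n : ℕ) :
    Module.finrank ℝ (restrictTotalDegree (Fin d) ℝ n) ≤ (n + d).choose d := by
  classical
  set s : Set (Fin d →₀ ℕ) := { m | (m.sum fun _ e => e) ≤ n } with hs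
  let F : s → Sym (Option (Fin d)) n := fun m =>
    ⟨Multiset.map some (Finsupp.toMultiset m.1)
      + Multiset.replicate (n - m.1.sum fun _ e => e) none, by
        have hle : (m.1.sum fun _ e => e) ≤ n := m.2
        have hid : ((m : Fin d →₀ ℕ).sum fun _ => id) = ((m : Fin d →₀ ℕ).sum fun _ e => e) :=
          rfl
        simp only [Multiset.card_add, Multiset.card_map, Multiset.card_replicate,
          Finsupp.card_toMultiset, hid]
        omega⟩
  have Finj : Function.Injective F := by
    intro m m' h
    have h' := congrArg Subtype.val h
    apply Subtype.ext
    apply Finsupp.ext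
    intro a
    have := congrArg (Multiset.count (some a)) h'
    simpa [F, Multiset.count_add, Multiset.count_replicate,
      Multiset.count_map_eq_count' some _ (Option.some_injective _),
      Finsupp.count_toMultiset] using this
  haveI : Finite s := Finite.of_injective F Finj
  haveI : Fintype s := Fintype.ofFinite _
  calc Module.finrank ℝ (restrictTotalDegree (Fin d) ℝ n)
      = Fintype.card s := Module.finrank_eq_card_basis (basisRestrictSupport ℝ s)
    _ ≤ Fintype.card (Sym (Option (Fin d)) n) := Fintype.card_le_of_injective F Finj
    _ = (n + d).choose d := by
        rw [Sym.card_sym_eq_choose, Fintype.card_option, Fintype.card_fin]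
        rw [show d + 1 + n - 1 = n + d by omega]
        rw [← Nat.choose_symm (Nat.le_add_right n d)]
        congr 1
        omega

private lemma sum_ite_coe {d : ℕ} (X : Finset (Fin d → ℝ)) (c : {x // x ∈ X} → ℝ)
    (y : Fin d → ℝ) (hy : y ∈ X) :
    ∑ i : {x // x ∈ X}, c i * (if y = ↑i then 1 else 0) = c ⟨y, hy⟩ := by
  rw [Finset.sum_eq_single ⟨y, hy⟩]
  · simp
  · intro i _ hne
    have : y ≠ ↑i := fun h => hne (Subtype.ext h.symm)
    simp [this]
  · intro h; exact absurd (Finset.mem_univ _) h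

/-- For a GC_{d,n} set X (n ≥ 1, d ≥ 1) with chosen factorizations of each Q_q
into affine-linear forms (a,c) ↦ (x ↦ ∑ aᵢxᵢ + c), for each p ∈ X the linear
parts a of the factors l of the Q_q (q ≠ p) which vanish at p span ℝ^d. -/
theorem gc_linear_parts_span (d n : ℕ) (hd : 1 ≤ d) (hn : 1 ≤ n)
    (X : Finset (Fin d → ℝ)) (hcard : X.card = (n + d).choose d)
    (l : (Fin d → ℝ) → Fin n → (Fin d → ℝ) × ℝ)
    (Q : (Fin d → ℝ) → MvPolynomial (Fin d) ℝ)
    (hfact : ∀ q ∈ X, Q q =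
      ∏ i, ((∑ j, MvPolynomial.C ((l q i).1 j) * MvPolynomial.X j) + MvPolynomial.C (l q i).2))
    (hdelta : ∀ p ∈ X, ∀ q ∈ X, eval q (Q p) = if q = p then 1 else 0)
    (p : Fin d → ℝ) (hp : p ∈ X) :
    Submodule.span ℝ
      {v : Fin d → ℝ | ∃ q ∈ X, q ≠ p ∧ ∃ i : Fin n,
        (l q i).1 = v ∧ (∑ j, v j * p j) + (l q i).2 = 0} = ⊤ := by
  classical
  by_contra hcon
  set Sset : Set (Fin d → ℝ) := {v : Fin d → ℝ | ∃ q ∈ X, q ≠ p ∧ ∃ i : Fin n,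
    (l q i).1 = v ∧ (∑ j, v j * p j) + (l q i).2 = 0} with hSset
  -- get a nonzero functional vanishing on the span
  obtain ⟨w, hw⟩ : ∃ w, w ∉ Submodule.span ℝ Sset := by
    by_contra h; push_neg at h; exact hcon (Submodule.eq_top_iff'.mpr h)
  have hw0 : Submodule.Quotient.mk (p := Submodule.span ℝ Sset) w ≠ 0 := by
    simpa [Submodule.Quotient.mk_eq_zero] using hw
  obtain ⟨φ₀, hφ₀⟩ : ∃ φ₀ : Module.Dual ℝ ((Fin d → ℝ) ⧸ Submodule.span ℝ Sset),
      φ₀ (Submodule.Quotient.mk w) ≠ 0 := by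
    by_contra h; push_neg at h
    exact hw0 ((Module.forall_dual_apply_eq_zero_iff ℝ _).mp h)
  set φ : (Fin d → ℝ) →ₗ[ℝ] ℝ := φ₀.comp (Submodule.span ℝ Sset).mkQ with hφdef
  set u : Fin d → ℝ := fun j => φ (fun k => if j = k then 1 else 0) with hu
  have hφ : ∀ x : Fin d → ℝ, φ x = ∑ j, x j * u j := by
    intro x
    conv_lhs => rw [pi_eq_sum_univ x]
    rw [map_sum]
    refine Finset.sum_congr rfl fun j _ => ?_
    rw [map_smul, smul_eq_mul, hu]
  have hSu : ∀ v ∈ Sset, ∑ j, v j * u j = 0 := by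
    intro v hv
    rw [← hφ]
    have hq0 : (Submodule.span ℝ Sset).mkQ v = 0 := by
      rw [Submodule.mkQ_apply, Submodule.Quotient.mk_eq_zero]
      exact Submodule.subset_span hv
    simp only [hφdef, LinearMap.comp_apply, hq0, map_zero]
  have hune : u ≠ 0 := by
    intro h0
    apply hφ₀
    have : φ w = 0 := by rw [hφ, h0]; simp
    simpa [hφdef] using this
  -- degree bounds
  have hQdeg : ∀ q ∈ X, (Q q).totalDegree ≤ n := by
    intro q hq
    rw [hfact q hq]
    refine le_trans (totalDegree_finset_prod _ _) ?_
    calc ∑ i : Fin n, ((∑ j, MvPolynomial.C ((l q i).1 j) * MvPolynomial.X j)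
          + MvPolynomial.C (l q i).2).totalDegree
        ≤ ∑ _i : Fin n, 1 := Finset.sum_le_sum fun i _ => affine_deg _ _
      _ = n := by simp
  set Rn := restrictTotalDegree (Fin d) ℝ n with hRn
  set v : {x // x ∈ X} → Rn := fun q =>
    ⟨Q q, (mem_restrictTotalDegree _ _ _).mpr (hQdeg _ q.2)⟩ with hv
  have hLI : LinearIndependent ℝ v := by
    rw [Fintype.linearIndependent_iff]
    intro g hg q
    have h0 : (∑ i : {x // x ∈ X}, g i • Q ↑i) = 0 := by
      have := congrArg Subtype.val hg
      simpa [hv] using this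
    have h1 := congrArg (eval (q : Fin d → ℝ)) h0
    rw [map_sum, map_zero] at h1
    simp only [smul_eval] at h1
    rw [Finset.sum_congr rfl (fun i _ => by rw [hdelta ↑i i.2 q q.2])] at h1
    rw [sum_ite_coe X g q q.2] at h1
    simpa using h1
  haveI : FiniteDimensional ℝ Rn := by
    rw [hRn]; infer_instance
  have hsp : Submodule.span ℝ (Set.range v) = ⊤ := by
    apply Submodule.eq_top_of_finrank_eq
    refine le_antisymm (Submodule.finrank_le _) ?_
    rw [finrank_span_eq_card hLI, Fintype.card_coe, hcard]
    exact finrank_rtd_le d n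
  -- the linear polynomial f
  set cst : ℝ := -(∑ j, u j * p j) with hcst
  set f : MvPolynomial (Fin d) ℝ :=
    (∑ j, MvPolynomial.C (u j) * MvPolynomial.X j) + MvPolynomial.C cst with hfdef
  have hf : f ∈ Rn := (mem_restrictTotalDegree _ _ _).mpr ((affine_deg u cst).trans hn)
  have hmem : (⟨f, hf⟩ : Rn) ∈ Submodule.span ℝ (Set.range v) := by
    rw [hsp]; exact Submodule.mem_top
  obtain ⟨c, hc⟩ := (Submodule.mem_span_range_iff_exists_fun ℝ).mp hmem
  have hcoe : ∑ i : {x // x ∈ X}, c i • Q ↑i = f := by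
    have := congrArg Subtype.val hc
    simpa [hv] using this
  -- evaluation of the representation at a point of X
  have heval : ∀ y : Fin d → ℝ, eval y f = ∑ i : {x // x ∈ X}, c i * eval y (Q ↑i) := by
    intro y
    rw [← hcoe, map_sum]
    exact Finset.sum_congr rfl fun i _ => smul_eval _ _ _
  have hcp : c ⟨p, hp⟩ = 0 := by
    have h1 := heval p
    rw [Finset.sum_congr rfl (fun i _ => by rw [hdelta ↑i i.2 p hp])] at h1
    rw [sum_ite_coe X c p hp] at h1
    rw [hfdef] at h1
    rw [affine_eval u cst p] at h1
    rw [hcst] at h1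
    linarith [h1]
  -- the point x₀ = p + u kills all Q q with q ≠ p
  set x₀ : Fin d → ℝ := fun j => p j + u j with hx₀
  have hfac : ∀ q ∈ X, q ≠ p → eval x₀ (Q q) = 0 := by
    intro q hq hqp
    have h0 : eval p (Q q) = 0 := by
      rw [hdelta q hq p hp, if_neg (fun h => hqp h.symm)]
    rw [hfact q hq, map_prod] at h0
    obtain ⟨i, -, hi⟩ := Finset.prod_eq_zero_iff.mp h0
    rw [affine_eval] at hi
    have hvS : (l q i).1 ∈ Sset := ⟨q, hq, hqp, i, rfl, hi⟩
    have hu0 : ∑ j, (l q i).1 j * u j = 0 := hSu _ hvS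
    rw [hfact q hq, map_prod]
    refine Finset.prod_eq_zero (Finset.mem_univ i) ?_
    rw [affine_eval]
    have hsplit : ∑ j, (l q i).1 j * x₀ j
        = (∑ j, (l q i).1 j * p j) + ∑ j, (l q i).1 j * u j := by
      rw [← Finset.sum_add_distrib]
      exact Finset.sum_congr rfl fun j _ => by rw [hx₀]; ring
    rw [hsplit, hu0]
    linarith [hi]
  -- evaluate everything at x₀
  have hrhs : eval x₀ f = 0 := by
    rw [heval x₀]
    refine Finset.sum_eq_zero fun i _ => ?_
    by_cases hip : (i : Fin d → ℝ) = p
    · have : i = ⟨p, hp⟩ := Subtype.ext hip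
      rw [this, hcp, zero_mul]
    · rw [hfac ↑i i.2 hip, mul_zero]
  have hlhs : eval x₀ f = ∑ j, u j * u j := by
    rw [hfdef, affine_eval, hcst]
    have : ∑ j, u j * x₀ j = (∑ j, u j * p j) + ∑ j, u j * u j := by
      rw [← Finset.sum_add_distrib]
      exact Finset.sum_congr rfl fun j _ => by rw [hx₀]; ring
    rw [this]; ring
  have husq : ∑ j, u j * u j = 0 := by rw [← hlhs, hrhs]
  apply hune
  funext j
  have := (Finset.sum_eq_zero_iff_of_nonneg (fun j _ => mul_self_nonneg (u j))).mp husq j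
    (Finset.mem_univ j)
  exact mul_self_eq_zero.mp this
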